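/- For all positive integers p, q with p < q, the series ∑_{n=0}^∞ (1/(n+1) − q/(p+nq)) converges and equals −(π/2)·cot(πp/q) − ln q + ∑_{n=1}^{q−1} ln(2·sin(πn/q))·cos(2πnp/q). -/

import Mathlib

open Real Finset

open Filter Complex Topology



noncomputable def ee (q : ℕ) (m : ℤ) : ℂ := Complex.exp ((2 * π * m / q : ℝ) * Complex.I)

lemma ee_add (q : ℕ) (a b : ℤ) : ee q (a + b) = ee q a * ee q b := by
  rw [ee, ee, ee, ← Complex.exp_add]
  congr 1
  push_cast
  ring

lemma ee_pow (q : ℕ) (m : ℤ) (n : ℕ) : ee q m ^ n = ee q (m * n) := by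
  rw [ee, ee, ← Complex.exp_nat_mul]
  congr 1
  push_cast
  ring

lemma ee_norm (q : ℕ) (m : ℤ) : ‖ee q m‖ = 1 := by
  rw [ee, Complex.norm_exp_ofReal_mul_I]

lemma ee_eq_one_iff {q : ℕ} (hq : 0 < q) (m : ℤ) : ee q m = 1 ↔ (q : ℤ) ∣ m := by
  have hq' : (q : ℝ) ≠ 0 := Nat.cast_ne_zero.mpr hq.ne'
  rw [ee, Complex.exp_eq_one_iff]
  constructor
  · rintro ⟨n, hn⟩
    refine ⟨n, ?_⟩
    have h2 : ((n : ℂ)) * (2 * π * Complex.I) = ((2 * π * n : ℝ) : ℂ) * Complex.I := by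
      push_cast; ring
    rw [h2] at hn
    have h3 : (2 * π * m / q : ℝ) = 2 * π * n := by
      exact_mod_cast mul_right_cancel₀ Complex.I_ne_zero hn
    have h4 : (m : ℝ) = q * n := by
      field_simp at h3
      nlinarith [Real.pi_pos, h3]
    exact_mod_cast h4
  · rintro ⟨n, hn⟩
    refine ⟨n, ?_⟩
    have hqc : (q : ℂ) ≠ 0 := Nat.cast_ne_zero.mpr hq.ne'
    rw [hn]
    push_cast
    field_simp


-- telescoping identity
lemma aux_sum_mul (z : ℂ) (n : ℕ) :
    (z - 1) * ∑ j ∈ range n, (j : ℂ) * z ^ j = n * z ^ n - z * ∑ j ∈ range n, z ^ j := by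
  induction n with
  | zero => simp
  | succ n ih =>
    rw [Finset.sum_range_succ, Finset.sum_range_succ, mul_add, ih]
    push_cast
    ring

lemma sum_zpow_eq_zero {q : ℕ} (hq : 0 < q) {z : ℂ} (hz1 : z ≠ 1) (hzq : z ^ q = 1) :
    ∑ j ∈ range q, z ^ j = 0 := by
  rw [geom_sum_eq hz1, hzq, sub_self, zero_div]

lemma sum_mul_zpow {q : ℕ} (hq : 0 < q) {z : ℂ} (hz1 : z ≠ 1) (hzq : z ^ q = 1) :
    ∑ j ∈ range q, (j : ℂ) * z ^ j = q / (z - 1) := by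
  have h := aux_sum_mul z q
  rw [hzq, sum_zpow_eq_zero hq hz1 hzq, mul_zero, sub_zero, mul_one] at h
  rw [eq_div_iff (sub_ne_zero.mpr hz1), mul_comm, h]

-- roots of unity filter
lemma filter_sum {q : ℕ} (hq : 0 < q) (m : ℤ) :
    ∑ j ∈ range q, (ee q m) ^ j = if (q : ℤ) ∣ m then (q : ℂ) else 0 := by
  split_ifs with h
  · rw [(ee_eq_one_iff hq m).mpr h]
    simp
  · have hz1 : ee q m ≠ 1 := fun hc => h ((ee_eq_one_iff hq m).mp hc)
    have hzq : (ee q m) ^ q = 1 := by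
      rw [ee_pow, ee_eq_one_iff hq]
      exact ⟨m, mul_comm _ _⟩
    exact sum_zpow_eq_zero hq hz1 hzq
lemma log_one_sub_exp {θ : ℝ} (h1 : 0 < θ) (h2 : θ < 2 * π) :
    Complex.log (1 - Complex.exp ((θ : ℝ) * Complex.I)) =
      ((Real.log (2 * Real.sin (θ / 2)) : ℝ) : ℂ) + (((θ - π) / 2 : ℝ) : ℂ) * Complex.I := by
  have hpi := Real.pi_pos
  have hs : 0 < Real.sin (θ / 2) := Real.sin_pos_of_pos_of_lt_pi (by linarith) (by linarith)
  have hr : (0 : ℝ) < 2 * Real.sin (θ / 2) := by linarith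
  have key : 1 - Complex.exp ((θ : ℝ) * Complex.I) =
      ((2 * Real.sin (θ / 2) : ℝ) : ℂ) * Complex.exp ((((θ - π) / 2 : ℝ)) * Complex.I) := by
    apply Complex.ext
    · simp only [Complex.sub_re, Complex.one_re, Complex.exp_ofReal_mul_I_re,
        Complex.mul_re, Complex.ofReal_re, Complex.ofReal_im, Complex.exp_ofReal_mul_I_im]
      have c1 : Real.cos θ = 1 - 2 * Real.sin (θ / 2) ^ 2 := by
        have h := Real.cos_two_mul (θ / 2)
        rw [show 2 * (θ / 2) = θ by ring] at h
        nlinarith [Real.sin_sq_add_cos_sq (θ / 2)]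
      have c2 : Real.cos ((θ - π) / 2) = Real.sin (θ / 2) := by
        rw [show (θ - π) / 2 = θ / 2 - π / 2 by ring, Real.cos_sub_pi_div_two]
      rw [c1, c2]; ring
    · simp only [Complex.sub_im, Complex.one_im, Complex.exp_ofReal_mul_I_im,
        Complex.mul_im, Complex.ofReal_re, Complex.ofReal_im, Complex.exp_ofReal_mul_I_re]
      have s1 : Real.sin θ = 2 * Real.sin (θ / 2) * Real.cos (θ / 2) := by
        have h := Real.sin_two_mul (θ / 2)
        rw [show 2 * (θ / 2) = θ by ring] at h
        linarith
      have s2 : Real.sin ((θ - π) / 2) = -Real.cos (θ / 2) := by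
        rw [show (θ - π) / 2 = θ / 2 - π / 2 by ring, Real.sin_sub_pi_div_two]
      rw [s1, s2]; ring
  rw [key]
  have h3 : ((2 * Real.sin (θ / 2) : ℝ) : ℂ) =
      Complex.exp ((Real.log (2 * Real.sin (θ / 2)) : ℝ) : ℂ) := by
    rw [← Complex.ofReal_exp, Real.exp_log hr]
  rw [h3, ← Complex.exp_add, Complex.log_exp]
  · simp only [Complex.add_im, Complex.ofReal_im, Complex.mul_im, Complex.ofReal_re,
      Complex.I_im, Complex.I_re, mul_one, mul_zero, add_zero, zero_add]
    linarith
  · simp only [Complex.add_im, Complex.ofReal_im, Complex.mul_im, Complex.ofReal_re,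
      Complex.I_im, Complex.I_re, mul_one, mul_zero, add_zero, zero_add]
    linarith
lemma re_lt_one_of_norm_one {z : ℂ} (hz : ‖z‖ = 1) (h1 : z ≠ 1) : z.re < 1 := by
  have hn : Complex.normSq z = 1 := by
    have : ‖z‖ = 1 := hz
    rw [← Complex.sq_norm, this]; norm_num
  rw [Complex.normSq_apply] at hn
  by_contra hc
  push_neg at hc
  have him : z.im = 0 := by nlinarith
  have hre : z.re = 1 := by nlinarith
  exact h1 (Complex.ext hre him)

lemma tendsto_log_series {z : ℂ} (hz : ‖z‖ = 1) (h1 : z ≠ 1) :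
    Tendsto (fun N => ∑ k ∈ range N, z ^ k / k) atTop (𝓝 (-Complex.log (1 - z))) := by
  have hz1 : z - 1 ≠ 0 := sub_ne_zero.mpr h1
  -- Step 1: partial sums converge to some limit, by Dirichlet's test
  obtain ⟨l, hl⟩ : ∃ l, Tendsto (fun N => ∑ k ∈ range N, z ^ k / k) atTop (𝓝 l) := by
    have hf0 : Tendsto (fun n : ℕ => (1 : ℝ) / (n + 1)) atTop (𝓝 0) :=
      tendsto_one_div_add_atTop_nhds_zero_nat
    have hfa : Antitone (fun n : ℕ => (1 : ℝ) / (n + 1)) := by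
      intro a b hab
      apply one_div_le_one_div_of_le (by positivity)
      exact_mod_cast by omega
    have hgb : ∀ n, ‖∑ i ∈ range n, z ^ (i + 1)‖ ≤ 2 / ‖z - 1‖ := by
      intro n
      have : ∑ i ∈ range n, z ^ (i + 1) = z * ((z ^ n - 1) / (z - 1)) := by
        rw [← geom_sum_eq h1 n, Finset.mul_sum]
        exact Finset.sum_congr rfl fun i _ => by ring
      rw [this, norm_mul, hz, one_mul, norm_div]
      apply div_le_div_of_nonneg_right ?_ (by positivity)
      · calc ‖z ^ n - 1‖ ≤ ‖z ^ n‖ + ‖(1 : ℂ)‖ := norm_sub_le _ _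
          _ = 2 := by rw [norm_pow, hz]; norm_num
    have hcs := hfa.cauchySeq_series_mul_of_tendsto_zero_of_bounded hf0 hgb
    obtain ⟨l, hl⟩ := cauchySeq_tendsto_of_complete hcs
    refine ⟨l, ?_⟩
    have heq : ∀ n : ℕ, ∑ k ∈ range (n + 1), z ^ k / k =
        ∑ i ∈ range n, ((1 : ℝ) / (i + 1)) • z ^ (i + 1) := by
      intro n
      rw [Finset.sum_range_succ']
      simp only [pow_zero, Nat.cast_zero, div_zero, add_zero]
      refine Finset.sum_congr rfl fun i _ => ?_
      rw [Complex.real_smul]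
      push_cast
      ring
    rw [show (fun N => ∑ k ∈ range N, z ^ k / k) =
        (fun N => ∑ k ∈ range N, z ^ k / k) from rfl, ← tendsto_add_atTop_iff_nat 1]
    exact hl.congr fun n => (heq n).symm
  -- Step 2: identify the limit via Abel's limit theorem
  have habel := Complex.tendsto_tsum_powerSeries_nhdsWithin_lt hl
  rw [Filter.tendsto_map'_iff] at habel
  have hcont : Tendsto (fun x : ℝ => -Complex.log (1 - z * x)) (𝓝[<] (1:ℝ)) (𝓝 (-Complex.log (1 - z))) := by
    have h2 : ContinuousAt Complex.log (1 - z) := by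
      apply continuousAt_clog
      left
      simp only [Complex.sub_re, Complex.one_re]
      linarith [re_lt_one_of_norm_one hz h1]
    have h3 : Tendsto (fun x : ℝ => 1 - z * x) (𝓝[<] (1:ℝ)) (𝓝 (1 - z)) := by
      have hcont2 : Continuous (fun x : ℝ => 1 - z * (x : ℂ)) :=
        continuous_const.sub (continuous_const.mul Complex.continuous_ofReal)
      have := hcont2.tendsto (1:ℝ)
      simp only [Complex.ofReal_one, mul_one] at this
      exact this.mono_left nhdsWithin_le_nhds
    exact ((h2.tendsto.comp h3).neg)
  simp only [Function.comp_def] at habel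
  have hEq : (fun x : ℝ => ∑' (n : ℕ), z ^ n / (n : ℂ) * (x : ℂ) ^ n) =ᶠ[𝓝[<] (1:ℝ)]
      (fun x : ℝ => -Complex.log (1 - z * x)) := by
    filter_upwards [Ioo_mem_nhdsLT_of_mem (Set.mem_Ioc.mpr ⟨zero_lt_one, le_refl 1⟩)] with x hx
    have hxn : ‖z * (x : ℂ)‖ < 1 := by
      rw [norm_mul, hz, one_mul, Complex.norm_real, Real.norm_eq_abs, abs_lt]
      exact ⟨by linarith [hx.1], hx.2⟩
    have hsum := Complex.hasSum_taylorSeries_neg_log hxn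
    rw [← hsum.tsum_eq]
    refine tsum_congr fun n => ?_
    rw [mul_pow]
    ring
  replace habel := habel.congr' hEq
  have : l = -Complex.log (1 - z) := tendsto_nhds_unique habel hcont
  exact this ▸ hl
lemma key_identity (p q N : ℕ) (hp : 0 < p) (hpq : p < q) :
    (q : ℂ) * ∑ n ∈ range N, (1 : ℂ) / (p + n * q) =
      ∑ j ∈ range q, ee q (-(j : ℤ) * p) * ∑ k ∈ range (N * q + 1), (ee q (j : ℤ)) ^ k / k := by
  have hq : 0 < q := hp.trans hpq
  have step1 : ∀ j k : ℕ, ee q (-(j : ℤ) * p) * ((ee q (j : ℤ)) ^ k / k) =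
      (1 / (k : ℂ)) * (ee q ((k : ℤ) - p)) ^ j := by
    intro j k
    rw [ee_pow, ee_pow, ← mul_div_assoc, ← ee_add]
    have : -(j : ℤ) * p + (j : ℤ) * k = ((k : ℤ) - p) * j := by ring
    rw [this]
    ring
  simp only [Finset.mul_sum]
  rw [Finset.sum_comm]
  have step2 : ∀ k : ℕ,
      ∑ j ∈ range q, ee q (-(j : ℤ) * p) * ((ee q (j : ℤ)) ^ k / k) =
      if (q : ℤ) ∣ ((k : ℤ) - p) then (q : ℂ) / k else 0 := by
    intro k
    rw [Finset.sum_congr rfl fun j _ => step1 j k, ← Finset.mul_sum, filter_sum hq]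
    split_ifs
    · ring
    · ring
  rw [Finset.sum_congr rfl fun k _ => step2 k, ← Finset.sum_filter]
  refine Finset.sum_nbij' (i := fun n => p + n * q) (j := fun k => (k - p) / q)
    ?_ ?_ ?_ ?_ ?_
  · intro n hn
    rw [Finset.mem_filter, Finset.mem_range] at *
    constructor
    · have : n * q ≤ (N - 1) * q := by
        apply Nat.mul_le_mul_right
        omega
      have hn' : n + 1 ≤ N := hn
      nlinarith
    · refine ⟨n, by push_cast; ring⟩
  · intro k hk
    rw [Finset.mem_filter, Finset.mem_range] at hk
    obtain ⟨hk1, m, hm⟩ := hk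
    have hpk : p ≤ k := by
      by_contra hc
      push_neg at hc
      have h1 : (0 : ℤ) < (p : ℤ) - k := by omega
      have h2 : (p : ℤ) - k < q := by omega
      have : (q : ℤ) ∣ ((p : ℤ) - k) := ⟨-m, by rw [mul_neg, ← hm]; ring⟩
      have := Int.le_of_dvd h1 this
      omega
    rw [Finset.mem_range, Nat.div_lt_iff_lt_mul hq]
    omega
  · intro n hn
    show (p + n * q - p) / q = n
    have h1 : p + n * q - p = n * q := by omega
    rw [h1, Nat.mul_div_cancel _ hq]
  · intro k hk
    rw [Finset.mem_filter, Finset.mem_range] at hk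
    obtain ⟨hk1, m, hm⟩ := hk
    have hpk : p ≤ k := by
      by_contra hc
      push_neg at hc
      have h1 : (0 : ℤ) < (p : ℤ) - k := by omega
      have : (q : ℤ) ∣ ((p : ℤ) - k) := ⟨-m, by rw [mul_neg, ← hm]; ring⟩
      have := Int.le_of_dvd h1 this
      omega
    have hdvd : q ∣ (k - p) := by
      have hcast : ((k - p : ℕ) : ℤ) = (k : ℤ) - p := by omega
      have h2 : (q : ℤ) ∣ ((k - p : ℕ) : ℤ) := ⟨m, by rw [hcast, hm]⟩
      exact_mod_cast h2
    have := Nat.div_mul_cancel hdvd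
    show p + (k - p) / q * q = k
    omega
  · intro n hn
    push_cast
    ring
lemma harmonic_real (n : ℕ) : ((harmonic n : ℚ) : ℝ) = ∑ k ∈ range n, (1 : ℝ) / (k + 1) := by
  rw [harmonic]
  push_cast
  refine Finset.sum_congr rfl fun k _ => ?_
  rw [one_div]

lemma harm_limit {q : ℕ} (hq : 0 < q) :
    Tendsto (fun N : ℕ => (∑ k ∈ range N, (1 : ℝ) / (k + 1)) -
      ∑ k ∈ range (N * q), (1 : ℝ) / (k + 1)) atTop (𝓝 (-Real.log q)) := by
  have h1 := Real.tendsto_harmonic_sub_log_add_one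
  have hmul : Tendsto (fun N : ℕ => N * q) atTop atTop :=
    Filter.tendsto_atTop_mono (fun n => Nat.le_mul_of_pos_right n hq) tendsto_id
  have h2 := h1.comp hmul
  have h3 : Tendsto (fun N : ℕ => Real.log (N + 1) - Real.log ((N * q : ℕ) + 1)) atTop
      (𝓝 (-Real.log q)) := by
    have hratio : Tendsto (fun N : ℕ => (((N * q : ℕ) : ℝ) + 1) / ((N : ℝ) + 1)) atTop
        (𝓝 q) := by
      have heq : ∀ N : ℕ, (((N * q : ℕ) : ℝ) + 1) / ((N : ℝ) + 1) =
          q + (1 - q) * (1 / ((N : ℝ) + 1)) := by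
        intro N
        have hN : ((N : ℝ) + 1) ≠ 0 := by positivity
        field_simp
        push_cast
        ring
      rw [show (𝓝 ((q : ℝ))) = 𝓝 ((q : ℝ) + (1 - q) * 0) by norm_num]
      exact Tendsto.congr (fun N => (heq N).symm)
        (tendsto_const_nhds.add (tendsto_const_nhds.mul tendsto_one_div_add_atTop_nhds_zero_nat))
    have hlog := (Real.continuousAt_log (by positivity : (q : ℝ) ≠ 0)).tendsto.comp hratio
    have heq2 : ∀ N : ℕ, Real.log ((((N * q : ℕ) : ℝ) + 1) / ((N : ℝ) + 1)) =
        Real.log ((N * q : ℕ) + 1) - Real.log (N + 1) := by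
      intro N
      rw [Real.log_div (by positivity) (by positivity)]
    have := hlog.neg
    refine Tendsto.congr ?_ this
    intro N
    rw [Function.comp_apply, heq2 N]
    ring
  have hcomb := (h1.sub h2).add h3
  rw [show eulerMascheroniConstant - eulerMascheroniConstant + -Real.log q = -Real.log q by ring]
    at hcomb
  refine Tendsto.congr ?_ hcomb
  intro N
  simp only [Function.comp_apply]
  rw [harmonic_real, harmonic_real]
  ring
lemma ee_nat (q j : ℕ) : ee q (j : ℤ) = Complex.exp (((2 * π * j / q : ℝ)) * Complex.I) := by
  rw [ee]
  norm_num

lemma ee_pow_nat_im (q p j : ℕ) : ((ee q (p : ℤ)) ^ j).im = Real.sin (2 * π * j * p / q) := by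
  rw [ee_pow, ee]
  rw [Complex.exp_ofReal_mul_I_im]
  congr 1
  push_cast
  ring

lemma A_eval {p q : ℕ} (hp : 0 < p) (hpq : p < q) :
    ∑ j ∈ Ico 1 q, (π * j / q - π / 2) * Real.sin (2 * π * j * p / q) =
      -(π / 2) * Real.cot (π * p / q) := by
  have hq : 0 < q := hp.trans hpq
  have hqr : (q : ℝ) ≠ 0 := Nat.cast_ne_zero.mpr hq.ne'
  have hqc : (q : ℂ) ≠ 0 := Nat.cast_ne_zero.mpr hq.ne'
  have hz1 : ee q (p : ℤ) ≠ 1 := by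
    intro hcon
    rw [ee_eq_one_iff hq] at hcon
    have := Int.le_of_dvd (by exact_mod_cast hp) hcon
    omega
  have hzq : ee q (p : ℤ) ^ q = 1 := by
    rw [ee_pow, ee_eq_one_iff hq]
    exact ⟨p, mul_comm _ _⟩
  have hzm1 : ee q (p : ℤ) - 1 ≠ 0 := sub_ne_zero.mpr hz1
  -- rewrite A as imaginary part of a complex sum
  have hA : ∑ j ∈ Ico 1 q, (π * j / q - π / 2) * Real.sin (2 * π * j * p / q) =
      (∑ j ∈ Ico 1 q, ((π * j / q - π / 2 : ℝ) : ℂ) * ee q (p : ℤ) ^ j).im := by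
    rw [Complex.im_sum]
    refine Finset.sum_congr rfl fun j _ => ?_
    rw [Complex.mul_im, Complex.ofReal_re, Complex.ofReal_im, ee_pow_nat_im]
    ring
  rw [hA]
  -- evaluate the complex sum
  have hsum : ∑ j ∈ Ico 1 q, ((π * j / q - π / 2 : ℝ) : ℂ) * ee q (p : ℤ) ^ j =
      (π : ℂ) / (ee q (p : ℤ) - 1) + (π : ℂ) / 2 := by
    have hbot := Finset.sum_eq_sum_Ico_succ_bot hq
      (fun j => ((π * j / q - π / 2 : ℝ) : ℂ) * ee q (p : ℤ) ^ j)
    rw [← Finset.range_eq_Ico] at hbot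
    have hfull : ∑ j ∈ range q, ((π * j / q - π / 2 : ℝ) : ℂ) * ee q (p : ℤ) ^ j = (π : ℂ) / (ee q (p : ℤ) - 1) := by
      have e1 : ∀ j : ℕ, ((π * j / q - π / 2 : ℝ) : ℂ) * ee q (p : ℤ) ^ j =
          ((π : ℂ) / q) * ((j : ℂ) * ee q (p : ℤ) ^ j) - ((π : ℂ) / 2) * ee q (p : ℤ) ^ j := by
        intro j
        push_cast
        ring
      rw [Finset.sum_congr rfl fun j _ => e1 j, Finset.sum_sub_distrib,
        ← Finset.mul_sum, ← Finset.mul_sum, sum_mul_zpow hq hz1 hzq,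
        sum_zpow_eq_zero hq hz1 hzq, mul_zero, sub_zero]
      field_simp
    have h0 : ((π * (0 : ℕ) / q - π / 2 : ℝ) : ℂ) * ee q (p : ℤ) ^ (0 : ℕ) = -((π : ℂ) / 2) := by
      push_cast
      ring
    rw [hfull, h0] at hbot
    linear_combination -hbot
  rw [hsum]
  -- compute the imaginary part
  have him : ((π : ℂ) / (ee q (p : ℤ) - 1) + (π : ℂ) / 2).im = π * ((ee q (p : ℤ) - 1)⁻¹).im := by
    simp [div_eq_mul_inv]
  rw [him, Complex.inv_im]
  have hcast : (((p : ℤ) : ℝ)) = (p : ℝ) := by push_cast; ring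
  have hre : (ee q (p : ℤ) - 1).re = Real.cos (2 * π * p / q) - 1 := by
    rw [ee, Complex.sub_re, Complex.exp_ofReal_mul_I_re, Complex.one_re, hcast]
  have him2 : (ee q (p : ℤ) - 1).im = Real.sin (2 * π * p / q) := by
    rw [ee, Complex.sub_im, Complex.exp_ofReal_mul_I_im, Complex.one_im, sub_zero, hcast]
  have hns : Complex.normSq (ee q (p : ℤ) - 1) = ((ee q (p : ℤ) - 1).re) ^ 2 + ((ee q (p : ℤ) - 1).im) ^ 2 := by
    rw [Complex.normSq_apply]; ring
  set x := π * p / q with hxdef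
  have harg : 2 * π * p / q = 2 * x := by rw [hxdef]; ring
  have hs : 0 < Real.sin x := by
    apply Real.sin_pos_of_pos_of_lt_pi
    · rw [hxdef]; positivity
    · rw [hxdef]
      rw [div_lt_iff₀ (by exact_mod_cast hq)]
      have : (p : ℝ) < q := by exact_mod_cast hpq
      nlinarith [Real.pi_pos]
  have hsin2 : Real.sin (2 * x) = 2 * Real.sin x * Real.cos x := Real.sin_two_mul x
  have hcos2 : Real.cos (2 * x) = 2 * Real.cos x ^ 2 - 1 := Real.cos_two_mul x
  rw [hns, hre, him2, harg, hsin2, hcos2]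
  have hden : (2 * Real.cos x ^ 2 - 1 - 1) ^ 2 + (2 * Real.sin x * Real.cos x) ^ 2 =
      4 * Real.sin x ^ 2 := by
    nlinarith [Real.sin_sq_add_cos_sq x]
  rw [hden, Real.cot_eq_cos_div_sin]
  field_simp
  ring
lemma final_re (p q : ℕ) (hp : 0 < p) (hpq : p < q) :
    (∑ j ∈ Ico 1 q, ee q (-(j : ℤ) * p) * Complex.log (1 - ee q (j : ℤ))).re =
      -(π / 2) * Real.cot (π * p / q) +
        ∑ n ∈ Finset.Icc 1 (q - 1), Real.log (2 * Real.sin (π * n / q)) *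
          Real.cos (2 * π * n * p / q) := by
  have hq : 0 < q := hp.trans hpq
  have hqr : (0 : ℝ) < q := by exact_mod_cast hq
  have hterm : ∀ j ∈ Ico 1 q, (ee q (-(j : ℤ) * p) * Complex.log (1 - ee q (j : ℤ))).re =
      Real.log (2 * Real.sin (π * j / q)) * Real.cos (2 * π * j * p / q) +
      (π * j / q - π / 2) * Real.sin (2 * π * j * p / q) := by
    intro j hj
    rw [Finset.mem_Ico] at hj
    have hj1 : (1 : ℝ) ≤ j := by exact_mod_cast hj.1
    have hj2 : (j : ℝ) < q := by exact_mod_cast hj.2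
    have hθ1 : 0 < 2 * π * j / q := by positivity
    have hθ2 : 2 * π * j / q < 2 * π := by
      rw [div_lt_iff₀ hqr]
      nlinarith [Real.pi_pos]
    have hee : ee q (j : ℤ) = Complex.exp (((2 * π * j / q : ℝ)) * Complex.I) := by
      rw [ee]
      norm_num
    have hlog := log_one_sub_exp hθ1 hθ2
    rw [← hee] at hlog
    rw [hlog, Complex.mul_re]
    have hre1 : (ee q (-(j : ℤ) * p)).re = Real.cos (2 * π * j * p / q) := by
      rw [ee, Complex.exp_ofReal_mul_I_re]
      rw [show (2 * π * ((-(j : ℤ) * p : ℤ) : ℝ) / q) = -(2 * π * j * p / q) by push_cast; ring,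
        Real.cos_neg]
    have him1 : (ee q (-(j : ℤ) * p)).im = -Real.sin (2 * π * j * p / q) := by
      rw [ee, Complex.exp_ofReal_mul_I_im]
      rw [show (2 * π * ((-(j : ℤ) * p : ℤ) : ℝ) / q) = -(2 * π * j * p / q) by push_cast; ring,
        Real.sin_neg]
    have hre2 : (((Real.log (2 * Real.sin (2 * π * j / q / 2)) : ℝ) : ℂ) +
        (((2 * π * j / q - π) / 2 : ℝ) : ℂ) * Complex.I).re =
        Real.log (2 * Real.sin (π * j / q)) := by
      simp only [Complex.add_re, Complex.ofReal_re, Complex.mul_re, Complex.ofReal_im,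
        Complex.I_re, Complex.I_im, mul_zero, mul_one, zero_mul, sub_zero, zero_sub, add_zero]
      rw [show (2 * π * j / q / 2) = π * j / q by ring]
    have him2 : (((Real.log (2 * Real.sin (2 * π * j / q / 2)) : ℝ) : ℂ) +
        (((2 * π * j / q - π) / 2 : ℝ) : ℂ) * Complex.I).im = π * j / q - π / 2 := by
      simp only [Complex.add_im, Complex.ofReal_im, Complex.mul_im, Complex.ofReal_re,
        Complex.I_re, Complex.I_im, mul_zero, mul_one, zero_mul, add_zero, zero_add]
      ring
    rw [hre1, him1, hre2, him2]
    ring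
  rw [Complex.re_sum, Finset.sum_congr rfl hterm, Finset.sum_add_distrib, A_eval hp hpq]
  have hIco : Ico 1 q = Finset.Icc 1 (q - 1) := by
    ext a
    simp only [Finset.mem_Ico, Finset.mem_Icc]
    omega
  rw [hIco]
  ring
theorem gauss_digamma_series (p q : ℕ) (hp : 0 < p) (hpq : p < q) :
    HasSum (fun n : ℕ => 1 / ((n : ℝ) + 1) - (q : ℝ) / ((p : ℝ) + (n : ℝ) * q))
      (-(π / 2) * Real.cot (π * p / q) - Real.log q +
        ∑ n ∈ Finset.Icc 1 (q - 1),
          Real.log (2 * Real.sin (π * n / q)) * Real.cos (2 * π * n * p / q)) := by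
  have hq : 0 < q := hp.trans hpq
  have hqr : (0 : ℝ) < q := by exact_mod_cast hq
  have hpr : (0 : ℝ) < p := by exact_mod_cast hp
  have hpqr : (p : ℝ) < q := by exact_mod_cast hpq
  set f : ℕ → ℝ := fun n => 1 / ((n : ℝ) + 1) - (q : ℝ) / ((p : ℝ) + (n : ℝ) * q) with hf
  -- summability
  have hpos : ∀ n : ℕ, (0 : ℝ) < (p : ℝ) + (n : ℝ) * q := fun n => by positivity
  have hsummable : Summable f := by
    rw [← summable_abs_iff]
    have hbase : Summable (fun n : ℕ => 1 / ((n : ℝ) + 1) ^ 2) := by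
      have h2 : Summable (fun n : ℕ => 1 / (n : ℝ) ^ 2) :=
        Real.summable_one_div_nat_pow.mpr (by norm_num)
      have := (summable_nat_add_iff 1).mpr h2
      refine this.congr fun n => ?_
      push_cast
      ring
    refine Summable.of_nonneg_of_le (fun n => abs_nonneg _) (fun n => ?_)
      (hbase.mul_left (q : ℝ))
    have hval : f n = ((p : ℝ) - q) / (((n : ℝ) + 1) * ((p : ℝ) + n * q)) := by
      rw [hf]
      have h1 : ((n : ℝ) + 1) ≠ 0 := by positivity
      have h2 : ((p : ℝ) + (n : ℝ) * q) ≠ 0 := (hpos n).ne'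
      field_simp
      ring
    rw [hval, abs_div, abs_of_pos (by positivity : (0:ℝ) < ((n : ℝ) + 1) * ((p : ℝ) + n * q))]
    rw [abs_of_nonpos (by linarith : (p : ℝ) - q ≤ 0)]
    rw [div_le_iff₀ (by positivity)]
    have hge : (n : ℝ) + 1 ≤ (p : ℝ) + n * q := by
      have hq1 : (1 : ℝ) ≤ q := by exact_mod_cast hq
      have hp1 : (1 : ℝ) ≤ p := by exact_mod_cast hp
      nlinarith [Nat.cast_nonneg (α := ℝ) n]
    have hn1 : (0 : ℝ) < (n : ℝ) + 1 := by positivity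
    calc -((p : ℝ) - q) ≤ (q : ℝ) := by linarith
      _ = (q : ℝ) * (1 / ((n:ℝ)+1)^2) * (((n:ℝ)+1) * ((n:ℝ)+1)) := by
          rw [show ((n:ℝ)+1) * ((n:ℝ)+1) = ((n:ℝ)+1)^2 by ring]
          field_simp
      _ ≤ (q : ℝ) * (1 / ((n:ℝ)+1)^2) * (((n:ℝ)+1) * ((p : ℝ) + n * q)) := by
          have hnn : (0:ℝ) ≤ (q : ℝ) * (1 / ((n:ℝ)+1)^2) := by positivity
          have := mul_le_mul_of_nonneg_left (mul_le_mul_of_nonneg_left hge hn1.le) hnn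
          linarith
  rw [hsummable.hasSum_iff_tendsto_nat]
  -- partial sum identity
  set H : ℕ → ℝ := fun M => ∑ k ∈ range M, (1 : ℝ) / (k + 1) with hH
  have hident : ∀ N : ℕ, ∑ n ∈ range N, f n = (H N - H (N * q)) -
      (∑ j ∈ Ico 1 q, ee q (-(j : ℤ) * p) *
        ∑ k ∈ range (N * q + 1), (ee q (j : ℤ)) ^ k / k).re := by
    intro N
    have hstep : ∑ n ∈ range N, f n = H N - (q : ℝ) * ∑ n ∈ range N, 1 / ((p : ℝ) + n * q) := by
      rw [hf, hH, Finset.sum_sub_distrib, Finset.mul_sum]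
      congr 1
      exact Finset.sum_congr rfl fun n _ => (mul_one_div _ _).symm
    have hkey := key_identity p q N hp hpq
    have hbridge : (((q : ℝ) * ∑ n ∈ range N, 1 / ((p : ℝ) + n * q) : ℝ) : ℂ) =
        (q : ℂ) * ∑ n ∈ range N, (1 : ℂ) / (p + n * q) := by
      push_cast
      rfl
    have hre : (q : ℝ) * ∑ n ∈ range N, 1 / ((p : ℝ) + n * q) =
        ((q : ℂ) * ∑ n ∈ range N, (1 : ℂ) / (p + n * q)).re := by
      rw [← hbridge, Complex.ofReal_re]
    rw [hstep, hre, hkey]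
    -- split off j = 0
    have hsplit := Finset.sum_eq_sum_Ico_succ_bot hq
      (fun j => ee q (-(j : ℤ) * p) * ∑ k ∈ range (N * q + 1), (ee q (j : ℤ)) ^ k / k)
    rw [← Finset.range_eq_Ico] at hsplit
    rw [hsplit]
    have h00 : ee q (-((0 : ℕ) : ℤ) * p) = 1 := by
      rw [show (-((0 : ℕ) : ℤ) * p) = (0 : ℤ) by ring, ee]
      norm_num
    have h01 : ∑ k ∈ range (N * q + 1), (ee q ((0 : ℕ) : ℤ)) ^ k / k = ((H (N * q) : ℝ) : ℂ) := by
      have he0 : ee q ((0 : ℕ) : ℤ) = 1 := by rw [ee]; norm_num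
      rw [he0]
      simp only [one_pow]
      rw [Finset.sum_range_succ']
      simp only [Nat.cast_zero, div_zero, add_zero]
      rw [hH]
      push_cast
      refine Finset.sum_congr rfl fun k _ => ?_
      norm_num
    rw [h00, h01, one_mul, Complex.add_re, Complex.ofReal_re]
    ring
  -- limits
  have hNq1 : Tendsto (fun N : ℕ => N * q + 1) atTop atTop := by
    apply Filter.tendsto_atTop_mono (fun n => by nlinarith [Nat.le_mul_of_pos_right n hq] : ∀ n : ℕ, n ≤ n * q + 1)
    exact tendsto_id
  have hrest : Tendsto (fun N : ℕ => ∑ j ∈ Ico 1 q, ee q (-(j : ℤ) * p) *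
      ∑ k ∈ range (N * q + 1), (ee q (j : ℤ)) ^ k / k) atTop
      (𝓝 (∑ j ∈ Ico 1 q, ee q (-(j : ℤ) * p) * -Complex.log (1 - ee q (j : ℤ)))) := by
    refine tendsto_finset_sum _ fun j hj => ?_
    rw [Finset.mem_Ico] at hj
    have hne1 : ee q (j : ℤ) ≠ 1 := by
      intro hcon
      rw [ee_eq_one_iff hq] at hcon
      have := Int.le_of_dvd (by exact_mod_cast hj.1) hcon
      omega
    have hnorm : ‖ee q (j : ℤ)‖ = 1 := ee_norm q _
    exact ((tendsto_log_series hnorm hne1).comp hNq1).const_mul _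
  have hrestre := (Complex.continuous_re.tendsto _).comp hrest
  have htot := (harm_limit hq).sub hrestre
  have hC : (∑ j ∈ Ico 1 q, ee q (-(j : ℤ) * p) * -Complex.log (1 - ee q (j : ℤ))).re
      = -((∑ j ∈ Ico 1 q, ee q (-(j : ℤ) * p) * Complex.log (1 - ee q (j : ℤ))).re) := by
    rw [← Complex.neg_re]
    congr 1
    rw [← Finset.sum_neg_distrib]
    exact Finset.sum_congr rfl fun j _ => by ring
  have hval : -Real.log q -
      (∑ j ∈ Ico 1 q, ee q (-(j : ℤ) * p) * -Complex.log (1 - ee q (j : ℤ))).re =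
      -(π / 2) * Real.cot (π * p / q) - Real.log q +
        ∑ n ∈ Finset.Icc 1 (q - 1),
          Real.log (2 * Real.sin (π * n / q)) * Real.cos (2 * π * n * p / q) := by
    rw [hC, final_re p q hp hpq]
    ring
  rw [← hval]
  exact htot.congr (fun N => (hident N).symm)
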